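/- Let X, Y take values in ℝ^q with the Euclidean metric, with marginals ν_X, ν_Y having finite first moments, and suppose E[|X|² + |Y|²] < ∞. Then the formula E[d_{ν_X}(X, X') d_{ν_Y}(Y, Y')] (with (X', Y') an independent copy of (X, Y)) equals E|X − X'||Y − Y'| + E|X − X'| · E|Y − Y''| − 2 E|X − X'||Y − Y''|, where (X', Y') and (X'', Y'') are independent copies of (X, Y). -/

import Mathlib

open MeasureTheory

lemma dcov_aux {S : Type*} [MeasurableSpace S] (μ : Measure S) [IsProbabilityMeasure μ]
    (f g : S → S → ℝ) (u v : S → ℝ)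
    (hfm : Measurable fun p : S × S => f p.1 p.2)
    (hgm : Measurable fun p : S × S => g p.1 p.2)
    (hf0 : ∀ s t, 0 ≤ f s t) (hg0 : ∀ s t, 0 ≤ g s t)
    (hfs : ∀ s t, f s t = f t s) (hgs : ∀ s t, g s t = g t s)
    (hu0 : ∀ s, 0 ≤ u s) (hv0 : ∀ s, 0 ≤ v s)
    (hfle : ∀ s t, f s t ≤ u s + u t) (hgle : ∀ s t, g s t ≤ v s + v t)
    (hu : Integrable u μ) (hv : Integrable v μ)
    (huv : Integrable (fun s => u s * v s) μ)
    (a b : S → ℝ) (A B : ℝ)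
    (ha : ∀ s, a s = ∫ t, f s t ∂μ) (hb : ∀ s, b s = ∫ t, g s t ∂μ)
    (hA : A = ∫ p : S × S, f p.1 p.2 ∂(μ.prod μ))
    (hB : B = ∫ p : S × S, g p.1 p.2 ∂(μ.prod μ)) :
    ∫ p : S × S, (f p.1 p.2 - a p.1 - a p.2 + A) * (g p.1 p.2 - b p.1 - b p.2 + B)
        ∂(μ.prod μ)
      = (∫ p : S × S, f p.1 p.2 * g p.1 p.2 ∂(μ.prod μ)) + A * B
        - 2 * ∫ p : S × S × S, f p.1 p.2.1 * g p.1 p.2.2 ∂(μ.prod (μ.prod μ)) := by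
  set Cu : ℝ := ∫ s, u s ∂μ with hCu
  set Cv : ℝ := ∫ s, v s ∂μ with hCv
  have hCu0 : 0 ≤ Cu := integral_nonneg hu0
  have hCv0 : 0 ≤ Cv := integral_nonneg hv0
  -- composition with coordinates
  have compFst : ∀ {F : S → ℝ}, Integrable F μ →
      Integrable (fun p : S × S => F p.1) (μ.prod μ) := by
    intro F hF
    simpa using hF.mul_prod (integrable_const (1 : ℝ))
  have compSnd : ∀ {F : S → ℝ}, Integrable F μ →
      Integrable (fun p : S × S => F p.2) (μ.prod μ) := by
    intro F hF
    simpa using (integrable_const (1 : ℝ)).mul_prod hF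
  -- slice integrability
  have hf_slice : ∀ s, Integrable (fun t => f s t) μ := by
    intro s
    refine ((integrable_const (u s)).add hu).mono'
      ((hfm.comp measurable_prodMk_left).aestronglyMeasurable) ?_
    filter_upwards with t
    rw [Real.norm_eq_abs, abs_of_nonneg (hf0 s t)]
    exact hfle s t
  have hg_slice : ∀ s, Integrable (fun t => g s t) μ := by
    intro s
    refine ((integrable_const (v s)).add hv).mono'
      ((hgm.comp measurable_prodMk_left).aestronglyMeasurable) ?_
    filter_upwards with t
    rw [Real.norm_eq_abs, abs_of_nonneg (hg0 s t)]
    exact hgle s t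
  -- bounds on a, b
  have ha0 : ∀ s, 0 ≤ a s := fun s => by rw [ha s]; exact integral_nonneg (fun t => hf0 s t)
  have hb0 : ∀ s, 0 ≤ b s := fun s => by rw [hb s]; exact integral_nonneg (fun t => hg0 s t)
  have ha_le : ∀ s, a s ≤ u s + Cu := by
    intro s
    rw [ha s]
    calc ∫ t, f s t ∂μ ≤ ∫ t, (u s + u t) ∂μ :=
          integral_mono (hf_slice s) ((integrable_const (u s)).add hu) (fun t => hfle s t)
      _ = u s + Cu := by rw [integral_add (integrable_const (u s)) hu, integral_const]; simp; rfl
  have hb_le : ∀ s, b s ≤ v s + Cv := by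
    intro s
    rw [hb s]
    calc ∫ t, g s t ∂μ ≤ ∫ t, (v s + v t) ∂μ :=
          integral_mono (hg_slice s) ((integrable_const (v s)).add hv) (fun t => hgle s t)
      _ = v s + Cv := by rw [integral_add (integrable_const (v s)) hv, integral_const]; simp; rfl
  -- measurability of a, b
  have ha_eq : a = fun s => ∫ t, (fun p : S × S => f p.1 p.2) (s, t) ∂μ := funext fun s => ha s
  have hb_eq : b = fun s => ∫ t, (fun p : S × S => g p.1 p.2) (s, t) ∂μ := funext fun s => hb s
  have ha_sm : StronglyMeasurable a := by
    rw [ha_eq]; exact hfm.stronglyMeasurable.integral_prod_right'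
  have hb_sm : StronglyMeasurable b := by
    rw [hb_eq]; exact hgm.stronglyMeasurable.integral_prod_right'
  have ha_int : Integrable a μ := by
    refine (hu.add (integrable_const Cu)).mono' ha_sm.aestronglyMeasurable ?_
    filter_upwards with s
    rw [Real.norm_eq_abs, abs_of_nonneg (ha0 s)]
    exact ha_le s
  have hb_int : Integrable b μ := by
    refine (hv.add (integrable_const Cv)).mono' hb_sm.aestronglyMeasurable ?_
    filter_upwards with s
    rw [Real.norm_eq_abs, abs_of_nonneg (hb0 s)]
    exact hb_le s
  -- integrability of f and g on the product
  have hf_int : Integrable (fun p : S × S => f p.1 p.2) (μ.prod μ) := by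
    refine ((compFst hu).add (compSnd hu)).mono' hfm.aestronglyMeasurable ?_
    filter_upwards with p
    rw [Real.norm_eq_abs, abs_of_nonneg (hf0 p.1 p.2)]
    exact hfle p.1 p.2
  have hg_int : Integrable (fun p : S × S => g p.1 p.2) (μ.prod μ) := by
    refine ((compFst hv).add (compSnd hv)).mono' hgm.aestronglyMeasurable ?_
    filter_upwards with p
    rw [Real.norm_eq_abs, abs_of_nonneg (hg0 p.1 p.2)]
    exact hgle p.1 p.2
  have hA_eq : A = ∫ s, a s ∂μ := by
    rw [hA, integral_prod _ hf_int, ha_eq]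
  have hB_eq : B = ∫ s, b s ∂μ := by
    rw [hB, integral_prod _ hg_int, hb_eq]
  have hB0 : 0 ≤ B := by
    rw [hB_eq]; exact integral_nonneg hb0
  -- master integrability lemma on the product space
  have master : ∀ (c cu cv : ℝ), Integrable
      (fun p : S × S => c * ((u p.1 + u p.2 + cu) * (v p.1 + v p.2 + cv))) (μ.prod μ) := by
    intro c cu cv
    have e : (fun p : S × S => (u p.1 + u p.2 + cu) * (v p.1 + v p.2 + cv))
        = fun p : S × S => u p.1 * v p.1 + u p.1 * v p.2 + v p.1 * u p.2 + u p.2 * v p.2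
          + cv * u p.1 + cv * u p.2 + cu * v p.1 + cu * v p.2 + cu * cv :=
      funext fun p => by ring
    refine Integrable.const_mul ?_ c
    rw [e]
    exact ((((((((compFst huv).add (hu.mul_prod hv)).add (hv.mul_prod hu)).add
      (compSnd huv)).add ((compFst hu).const_mul cv)).add ((compSnd hu).const_mul cv)).add
      ((compFst hv).const_mul cu)).add ((compSnd hv).const_mul cu)).add (integrable_const _)
  -- the centered g
  have hG_int : Integrable
      (fun p : S × S => g p.1 p.2 - b p.1 - b p.2 + B) (μ.prod μ) :=
    ((hg_int.sub (compFst hb_int)).sub (compSnd hb_int)).add (integrable_const B)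
  have hG_sm : StronglyMeasurable (fun p : S × S => g p.1 p.2 - b p.1 - b p.2 + B) :=
    ((hgm.stronglyMeasurable.sub (hb_sm.comp_measurable measurable_fst)).sub
      (hb_sm.comp_measurable measurable_snd)).add stronglyMeasurable_const
  have hG_abs : ∀ p : S × S, |g p.1 p.2 - b p.1 - b p.2 + B|
      ≤ 2 * (v p.1 + v p.2 + (Cv + B)) := by
    intro p
    rw [abs_le]
    constructor
    · have := hb_le p.1; have := hb_le p.2; have := hg0 p.1 p.2
      have := hv0 p.1; have := hv0 p.2
      nlinarith
    · have := hb0 p.1; have := hb0 p.2; have := hgle p.1 p.2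
      have := hv0 p.1; have := hv0 p.2
      nlinarith
  -- integrability of the various product terms
  have hfg_int : Integrable (fun p : S × S => f p.1 p.2 * g p.1 p.2) (μ.prod μ) := by
    refine (master 1 0 0).mono' (hfm.mul hgm).aestronglyMeasurable ?_
    filter_upwards with p
    rw [Real.norm_eq_abs, abs_of_nonneg (mul_nonneg (hf0 p.1 p.2) (hg0 p.1 p.2))]
    have h1 := hfle p.1 p.2; have h2 := hgle p.1 p.2
    have := hf0 p.1 p.2; have := hg0 p.1 p.2
    have := hu0 p.1; have := hu0 p.2; have := hv0 p.1; have := hv0 p.2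
    nlinarith
  have hfb1_int : Integrable (fun p : S × S => f p.1 p.2 * b p.1) (μ.prod μ) := by
    refine (master 1 0 Cv).mono'
      (hfm.mul (hb_sm.measurable.comp measurable_fst)).aestronglyMeasurable ?_
    filter_upwards with p
    rw [Real.norm_eq_abs, abs_of_nonneg (mul_nonneg (hf0 p.1 p.2) (hb0 p.1))]
    have h1 := hfle p.1 p.2; have h2 := hb_le p.1
    have := hf0 p.1 p.2; have := hb0 p.1
    have := hu0 p.1; have := hu0 p.2; have := hv0 p.1; have := hv0 p.2
    nlinarith
  have hfb2_int : Integrable (fun p : S × S => f p.1 p.2 * b p.2) (μ.prod μ) := by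
    refine (master 1 0 Cv).mono'
      (hfm.mul (hb_sm.measurable.comp measurable_snd)).aestronglyMeasurable ?_
    filter_upwards with p
    rw [Real.norm_eq_abs, abs_of_nonneg (mul_nonneg (hf0 p.1 p.2) (hb0 p.2))]
    have h1 := hfle p.1 p.2; have h2 := hb_le p.2
    have := hf0 p.1 p.2; have := hb0 p.2
    have := hu0 p.1; have := hu0 p.2; have := hv0 p.1; have := hv0 p.2
    nlinarith
  have ha1G_int : Integrable
      (fun p : S × S => a p.1 * (g p.1 p.2 - b p.1 - b p.2 + B)) (μ.prod μ) := by
    refine (master 2 Cu (Cv + B)).mono'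
      ((ha_sm.comp_measurable measurable_fst).mul hG_sm).aestronglyMeasurable ?_
    filter_upwards with p
    rw [Real.norm_eq_abs, abs_mul, abs_of_nonneg (ha0 p.1)]
    have h1 := ha_le p.1; have h2 := hG_abs p
    have := ha0 p.1; have := abs_nonneg (g p.1 p.2 - b p.1 - b p.2 + B)
    have := hu0 p.1; have := hu0 p.2; have := hv0 p.1; have := hv0 p.2
    nlinarith
  have ha2G_int : Integrable
      (fun p : S × S => a p.2 * (g p.1 p.2 - b p.1 - b p.2 + B)) (μ.prod μ) := by
    refine (master 2 Cu (Cv + B)).mono'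
      ((ha_sm.comp_measurable measurable_snd).mul hG_sm).aestronglyMeasurable ?_
    filter_upwards with p
    rw [Real.norm_eq_abs, abs_mul, abs_of_nonneg (ha0 p.2)]
    have h1 := ha_le p.2; have h2 := hG_abs p
    have := ha0 p.2; have := abs_nonneg (g p.1 p.2 - b p.1 - b p.2 + B)
    have := hu0 p.1; have := hu0 p.2; have := hv0 p.1; have := hv0 p.2
    nlinarith
  have hfG_int : Integrable
      (fun p : S × S => f p.1 p.2 * (g p.1 p.2 - b p.1 - b p.2 + B)) (μ.prod μ) := by
    have e : (fun p : S × S => f p.1 p.2 * (g p.1 p.2 - b p.1 - b p.2 + B))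
        = fun p : S × S => f p.1 p.2 * g p.1 p.2 - f p.1 p.2 * b p.1 - f p.1 p.2 * b p.2
          + B * f p.1 p.2 := funext fun p => by ring
    rw [e]
    exact ((hfg_int.sub hfb1_int).sub hfb2_int).add (hf_int.const_mul B)
  -- the inner integral of the centered g vanishes
  have inner_G : ∀ s, ∫ t, (g s t - b s - b t + B) ∂μ = 0 := by
    intro s
    have I1 : Integrable (fun t => g s t - b s) μ := (hg_slice s).sub (integrable_const (b s))
    have I2 : Integrable (fun t => g s t - b s - b t) μ := I1.sub hb_int
    rw [integral_add I2 (integrable_const B), integral_sub I1 hb_int,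
      integral_sub (hg_slice s) (integrable_const (b s)),
      integral_const, integral_const, ← hb s, ← hB_eq]
    simp
  have int_G : ∫ p : S × S, (g p.1 p.2 - b p.1 - b p.2 + B) ∂(μ.prod μ) = 0 := by
    rw [integral_prod _ hG_int]
    simp only [inner_G]
    simp
  have int_a1G : ∫ p : S × S, a p.1 * (g p.1 p.2 - b p.1 - b p.2 + B) ∂(μ.prod μ) = 0 := by
    rw [integral_prod _ ha1G_int]
    have h : ∀ s, ∫ t, a s * (g s t - b s - b t + B) ∂μ = 0 := by
      intro s
      rw [integral_const_mul, inner_G s, mul_zero]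
    simp only [h]
    simp
  have int_a2G : ∫ p : S × S, a p.2 * (g p.1 p.2 - b p.1 - b p.2 + B) ∂(μ.prod μ) = 0 := by
    rw [← int_a1G, ← integral_prod_swap
      (fun p : S × S => a p.2 * (g p.1 p.2 - b p.1 - b p.2 + B))]
    congr 1
    funext z
    simp only [Prod.swap, Prod.fst, Prod.snd]
    rw [hgs z.2 z.1]
    ring
  -- the f * b terms
  have int_fb1 : ∫ p : S × S, f p.1 p.2 * b p.1 ∂(μ.prod μ) = ∫ s, a s * b s ∂μ := by
    rw [integral_prod _ hfb1_int]
    have h : ∀ s, ∫ t, f s t * b s ∂μ = a s * b s := by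
      intro s
      rw [integral_mul_const, ← ha s]
    simp only [h]
  have int_fb2 : ∫ p : S × S, f p.1 p.2 * b p.2 ∂(μ.prod μ) = ∫ s, a s * b s ∂μ := by
    rw [← int_fb1, ← integral_prod_swap (fun p : S × S => f p.1 p.2 * b p.2)]
    congr 1
    funext z
    simp only [Prod.swap, Prod.fst, Prod.snd]
    rw [hfs z.2 z.1]
  -- the f * G term
  have int_fG : ∫ p : S × S, f p.1 p.2 * (g p.1 p.2 - b p.1 - b p.2 + B) ∂(μ.prod μ)
      = (∫ p : S × S, f p.1 p.2 * g p.1 p.2 ∂(μ.prod μ)) - 2 * (∫ s, a s * b s ∂μ)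
        + A * B := by
    have e : (fun p : S × S => f p.1 p.2 * (g p.1 p.2 - b p.1 - b p.2 + B))
        = fun p : S × S => f p.1 p.2 * g p.1 p.2 - f p.1 p.2 * b p.1 - f p.1 p.2 * b p.2
          + B * f p.1 p.2 := funext fun p => by ring
    have J1 : Integrable (fun p : S × S => f p.1 p.2 * g p.1 p.2 - f p.1 p.2 * b p.1)
        (μ.prod μ) := hfg_int.sub hfb1_int
    have J2 : Integrable
        (fun p : S × S => f p.1 p.2 * g p.1 p.2 - f p.1 p.2 * b p.1 - f p.1 p.2 * b p.2)
        (μ.prod μ) := J1.sub hfb2_int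
    rw [e, integral_add J2 (hf_int.const_mul B),
      integral_sub J1 hfb2_int, integral_sub hfg_int hfb1_int,
      integral_const_mul, ← hA, int_fb1, int_fb2]
    ring
  -- the triple integral
  have hT3_int : Integrable (fun p : S × S × S => f p.1 p.2.1 * g p.1 p.2.2)
      (μ.prod (μ.prod μ)) := by
    have i1 : Integrable (fun p : S × S × S => u p.1 * v p.1) (μ.prod (μ.prod μ)) := by
      simpa using huv.mul_prod (integrable_const (1 : ℝ) (μ := μ.prod μ))
    have j2 : Integrable (fun q : S × S => v q.2) (μ.prod μ) := compSnd hv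
    have i2 : Integrable (fun p : S × S × S => u p.1 * v p.2.2) (μ.prod (μ.prod μ)) :=
      hu.mul_prod j2
    have j3 : Integrable (fun q : S × S => u q.1) (μ.prod μ) := compFst hu
    have i3 : Integrable (fun p : S × S × S => v p.1 * u p.2.1) (μ.prod (μ.prod μ)) :=
      hv.mul_prod j3
    have i4 : Integrable (fun p : S × S × S => u p.2.1 * v p.2.2) (μ.prod (μ.prod μ)) := by
      simpa using (integrable_const (1 : ℝ)).mul_prod (hu.mul_prod hv)
    have hm : Measurable (fun p : S × S × S => f p.1 p.2.1 * g p.1 p.2.2) := by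
      have m1 : Measurable (fun p : S × S × S => f p.1 p.2.1) :=
        hfm.comp (measurable_fst.prodMk (measurable_fst.comp measurable_snd))
      have m2 : Measurable (fun p : S × S × S => g p.1 p.2.2) :=
        hgm.comp (measurable_fst.prodMk (measurable_snd.comp measurable_snd))
      exact m1.mul m2
    refine (((i1.add i2).add i3).add i4).mono' hm.aestronglyMeasurable ?_
    filter_upwards with p
    simp only [Pi.add_apply]
    rw [Real.norm_eq_abs, abs_of_nonneg (mul_nonneg (hf0 p.1 p.2.1) (hg0 p.1 p.2.2))]
    have h1 := hfle p.1 p.2.1; have h2 := hgle p.1 p.2.2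
    have := hf0 p.1 p.2.1; have := hg0 p.1 p.2.2
    have := hu0 p.1; have := hu0 p.2.1; have := hv0 p.1; have := hv0 p.2.2
    nlinarith [mul_le_mul h1 h2 (hg0 p.1 p.2.2) (by positivity : (0:ℝ) ≤ u p.1 + u p.2.1)]
  have int_T3 : ∫ p : S × S × S, f p.1 p.2.1 * g p.1 p.2.2 ∂(μ.prod (μ.prod μ))
      = ∫ s, a s * b s ∂μ := by
    rw [integral_prod _ hT3_int]
    have h : ∀ s, ∫ q : S × S, f s q.1 * g s q.2 ∂(μ.prod μ) = a s * b s := by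
      intro s
      rw [integral_prod_mul (fun t => f s t) (fun t => g s t), ← ha s, ← hb s]
    simp only [h]
  -- put everything together
  have e : (fun p : S × S => (f p.1 p.2 - a p.1 - a p.2 + A)
        * (g p.1 p.2 - b p.1 - b p.2 + B))
      = fun p : S × S => f p.1 p.2 * (g p.1 p.2 - b p.1 - b p.2 + B)
        - a p.1 * (g p.1 p.2 - b p.1 - b p.2 + B)
        - a p.2 * (g p.1 p.2 - b p.1 - b p.2 + B)
        + A * (g p.1 p.2 - b p.1 - b p.2 + B) := funext fun p => by ring
  have K1 : Integrable (fun p : S × S => f p.1 p.2 * (g p.1 p.2 - b p.1 - b p.2 + B)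
      - a p.1 * (g p.1 p.2 - b p.1 - b p.2 + B)) (μ.prod μ) := hfG_int.sub ha1G_int
  have K2 : Integrable (fun p : S × S => f p.1 p.2 * (g p.1 p.2 - b p.1 - b p.2 + B)
      - a p.1 * (g p.1 p.2 - b p.1 - b p.2 + B)
      - a p.2 * (g p.1 p.2 - b p.1 - b p.2 + B)) (μ.prod μ) := K1.sub ha2G_int
  rw [e, integral_add K2 (hG_int.const_mul A),
    integral_sub K1 ha2G_int, integral_sub hfG_int ha1G_int,
    integral_const_mul, int_fG, int_a1G, int_a2G, int_G, int_T3]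
  ring


/-- In Euclidean space, the metric-space definition of distance covariance by double centering
agrees with the Székely–Rizzo–Bakirov moment formula:
`E[d_{νX}(X,X') d_{νY}(Y,Y')] = E|X−X'||Y−Y'| + E|X−X'|·E|Y−Y''| − 2E|X−X'||Y−Y''|`. -/
theorem dcov_centered_eq_moment_formula (q : ℕ)
    {S : Type*} [MeasurableSpace S] (μ : Measure S) [IsProbabilityMeasure μ]
    (X Y : S → EuclideanSpace ℝ (Fin q)) (hX : Measurable X) (hY : Measurable Y)
    (hmomX : Integrable (fun s => ‖X s‖ ^ 2) μ)
    (hmomY : Integrable (fun s => ‖Y s‖ ^ 2) μ)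
    -- the doubly-centered distances with respect to the marginals of X and Y
    (dX dY : EuclideanSpace ℝ (Fin q) → EuclideanSpace ℝ (Fin q) → ℝ)
    (hdX : ∀ x x', dX x x' = ‖x - x'‖ - (∫ s, ‖x - X s‖ ∂μ) - (∫ s, ‖x' - X s‖ ∂μ)
        + ∫ p : S × S, ‖X p.1 - X p.2‖ ∂(μ.prod μ))
    (hdY : ∀ y y', dY y y' = ‖y - y'‖ - (∫ s, ‖y - Y s‖ ∂μ) - (∫ s, ‖y' - Y s‖ ∂μ)
        + ∫ p : S × S, ‖Y p.1 - Y p.2‖ ∂(μ.prod μ)) :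
    -- (X', Y') is the second coordinate of the product space (an independent copy of (X, Y)),
    -- (X'', Y'') is a third independent copy
    ∫ p : S × S, dX (X p.1) (X p.2) * dY (Y p.1) (Y p.2) ∂(μ.prod μ)
      = (∫ p : S × S, ‖X p.1 - X p.2‖ * ‖Y p.1 - Y p.2‖ ∂(μ.prod μ))
        + (∫ p : S × S, ‖X p.1 - X p.2‖ ∂(μ.prod μ))
            * (∫ p : S × S, ‖Y p.1 - Y p.2‖ ∂(μ.prod μ))
        - 2 * ∫ p : S × S × S, ‖X p.1 - X p.2.1‖ * ‖Y p.1 - Y p.2.2‖ ∂(μ.prod (μ.prod μ)) := by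
  have hu : Integrable (fun s => ‖X s‖) μ := by
    refine ((integrable_const (1 : ℝ)).add hmomX).mono' hX.norm.aestronglyMeasurable ?_
    filter_upwards with s
    simp only [Pi.add_apply]
    rw [Real.norm_eq_abs, abs_of_nonneg (norm_nonneg _)]
    nlinarith [sq_nonneg (‖X s‖ - 1)]
  have hv : Integrable (fun s => ‖Y s‖) μ := by
    refine ((integrable_const (1 : ℝ)).add hmomY).mono' hY.norm.aestronglyMeasurable ?_
    filter_upwards with s
    simp only [Pi.add_apply]
    rw [Real.norm_eq_abs, abs_of_nonneg (norm_nonneg _)]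
    nlinarith [sq_nonneg (‖Y s‖ - 1)]
  have huv : Integrable (fun s => ‖X s‖ * ‖Y s‖) μ := by
    refine ((hmomX.add hmomY).div_const 2).mono'
      (hX.norm.mul hY.norm).aestronglyMeasurable ?_
    filter_upwards with s
    simp only [Pi.add_apply]
    rw [Real.norm_eq_abs, abs_of_nonneg (by positivity)]
    nlinarith [sq_nonneg (‖X s‖ - ‖Y s‖)]
  have hfm : Measurable fun p : S × S => ‖X p.1 - X p.2‖ :=
    ((hX.comp measurable_fst).sub (hX.comp measurable_snd)).norm
  have hgm : Measurable fun p : S × S => ‖Y p.1 - Y p.2‖ :=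
    ((hY.comp measurable_fst).sub (hY.comp measurable_snd)).norm
  have key := dcov_aux μ (fun s t => ‖X s - X t‖) (fun s t => ‖Y s - Y t‖)
    (fun s => ‖X s‖) (fun s => ‖Y s‖) hfm hgm
    (fun s t => norm_nonneg _) (fun s t => norm_nonneg _)
    (fun s t => norm_sub_rev _ _) (fun s t => norm_sub_rev _ _)
    (fun s => norm_nonneg _) (fun s => norm_nonneg _)
    (fun s t => norm_sub_le _ _) (fun s t => norm_sub_le _ _)
    hu hv huv
    (fun s => ∫ t, ‖X s - X t‖ ∂μ) (fun s => ∫ t, ‖Y s - Y t‖ ∂μ)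
    (∫ p : S × S, ‖X p.1 - X p.2‖ ∂(μ.prod μ)) (∫ p : S × S, ‖Y p.1 - Y p.2‖ ∂(μ.prod μ))
    (fun s => rfl) (fun s => rfl) rfl rfl
  simp only [hdX, hdY]
  exact key
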